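/- Let n = 2(2k+1) for a natural number k ≥ 1, and let W be the dihedral group of order 2n with Coxeter generating set {s,t} of type I₂(n) (i.e. o(st) = n). Let ρ = (st)^{n/2} be the central element of W. Then {s, tst, ρ} is also a Coxeter generating set of W, of type I₂(2k+1) × A₁: o(s·tst) = 2k+1, o(sρ) = o(tst·ρ) = 2, and the three involutions s, tst, ρ generate W with these relations presenting W. -/

import Mathlib

open scoped Classical

/-- The Coxeter matrix of type `I₂(2k+1) × A₁` on the index set `{s, tst, (st)^(2k+1)}`. -/
private noncomputable def dMat {W : Type*} [Group W] (k : ℕ) (hk : 1 ≤ k) (s t : W) :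
    CoxeterMatrix ↥({s, t * s * t, (s * t) ^ (2 * k + 1)} : Set W) where
  M := fun i j => if (i : W) = (j : W) then 1
    else if (i : W) = (s * t) ^ (2 * k + 1) ∨ (j : W) = (s * t) ^ (2 * k + 1) then 2
    else 2 * k + 1
  isSymm := by
    ext i j
    show (if (j : W) = (i : W) then 1
      else if (j : W) = (s * t) ^ (2 * k + 1) ∨ (i : W) = (s * t) ^ (2 * k + 1) then 2
      else 2 * k + 1) = (if (i : W) = (j : W) then 1
      else if (i : W) = (s * t) ^ (2 * k + 1) ∨ (j : W) = (s * t) ^ (2 * k + 1) then 2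
      else 2 * k + 1)
    by_cases h : (i : W) = (j : W)
    · simp [h]
    · simp [h, Ne.symm h, or_comm]
  diagonal := fun i => if_pos rfl
  off_diagonal := fun i j hij => by
    have h : (i : W) ≠ (j : W) := fun hh => hij (Subtype.ext hh)
    show (if (i : W) = (j : W) then 1
      else if (i : W) = (s * t) ^ (2 * k + 1) ∨ (j : W) = (s * t) ^ (2 * k + 1) then 2
      else 2 * k + 1) ≠ 1
    rw [if_neg h]
    by_cases h2 : (i : W) = (s * t) ^ (2 * k + 1) ∨ (j : W) = (s * t) ^ (2 * k + 1)
    · rw [if_pos h2]; omega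
    · rw [if_neg h2]; omega

private theorem dMat_apply {W : Type*} [Group W] (k : ℕ) (hk : 1 ≤ k) (s t : W)
    (i j : ↥({s, t * s * t, (s * t) ^ (2 * k + 1)} : Set W)) :
    (dMat k hk s t).M i j = (if (i : W) = (j : W) then 1
      else if (i : W) = (s * t) ^ (2 * k + 1) ∨ (j : W) = (s * t) ^ (2 * k + 1) then 2
      else 2 * k + 1) := by
  unfold dMat
  rfl

/-- A subset `R` of a group `W` is a Coxeter generating set if there is a Coxeter system on `W`
whose simple reflections are exactly the elements of `R`. -/
def IsCoxeterGenSet {W : Type*} [Group W] (R : Set W) : Prop :=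
  ∃ (M : CoxeterMatrix R) (cs : CoxeterSystem M W), ∀ r : R, cs.simple r = (r : W)

set_option maxHeartbeats 1600000 in
/-- Let `n = 2(2k+1)`, `k ≥ 1`, and let `W` be the dihedral group of order `2n`
with Coxeter generating set `{s, t}` of type `I₂(n)` (so `o(st) = n`).  Let
`ρ = (st)^(n/2) = (st)^(2k+1)` be the central element of `W`.  Then `{s, tst, ρ}` is also a
Coxeter generating set of `W`, of type `I₂(2k+1) × A₁`:
`o(s · tst) = 2k+1`, `o(sρ) = o(tst · ρ) = 2`. -/
theorem dihedral_pseudo_transposition_gen_set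
    {W : Type*} [Group W] (k : ℕ) (hk : 1 ≤ k) (s t : W) (hne : s ≠ t)
    (hgen : IsCoxeterGenSet {s, t})
    (hord : orderOf (s * t) = 2 * (2 * k + 1)) :
    (∀ w : W, (s * t) ^ (2 * k + 1) * w = w * (s * t) ^ (2 * k + 1)) ∧
    orderOf (s * (t * s * t)) = 2 * k + 1 ∧
    orderOf (s * (s * t) ^ (2 * k + 1)) = 2 ∧
    orderOf ((t * s * t) * (s * t) ^ (2 * k + 1)) = 2 ∧
    IsCoxeterGenSet {s, t * s * t, (s * t) ^ (2 * k + 1)} := by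
  obtain ⟨M, cs, hsimp⟩ := hgen
  have hmemS : s ∈ ({s, t} : Set W) := Set.mem_insert _ _
  have hmemT : t ∈ ({s, t} : Set W) := Set.mem_insert_of_mem _ rfl
  have hS : cs.simple ⟨s, hmemS⟩ = s := hsimp _
  have hT : cs.simple ⟨t, hmemT⟩ = t := hsimp _
  have hs2 : s * s = 1 := by rw [← hS]; exact cs.simple_mul_simple_self _
  have ht2 : t * t = 1 := by rw [← hT]; exact cs.simple_mul_simple_self _
  have hsinv : s⁻¹ = s := inv_eq_of_mul_eq_one_right hs2
  have htinv : t⁻¹ = t := inv_eq_of_mul_eq_one_right ht2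
  have hnpow : (s * t) ^ (2 * (2 * k + 1)) = 1 := by rw [← hord]; exact pow_orderOf_eq_one _
  have hρ2 : (s * t) ^ (2 * k + 1) * (s * t) ^ (2 * k + 1) = 1 := by
    rw [← pow_add, show 2 * k + 1 + (2 * k + 1) = 2 * (2 * k + 1) by ring]
    exact hnpow
  have hρinv : ((s * t) ^ (2 * k + 1))⁻¹ = (s * t) ^ (2 * k + 1) :=
    inv_eq_of_mul_eq_one_right hρ2
  have hstinv : (s * t)⁻¹ = t * s := by rw [mul_inv_rev, hsinv, htinv]
  have hconjS : s * (s * t) * s⁻¹ = (s * t)⁻¹ := by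
    rw [hstinv, hsinv, show s * (s * t) * s = s * s * (t * s) by group, hs2, one_mul]
  have hconjT : t * (s * t) * t⁻¹ = (s * t)⁻¹ := by
    rw [hstinv, htinv, show t * (s * t) * t = t * s * (t * t) by group, ht2, mul_one]
  have hρcomm : ∀ x : W, x * (s * t) * x⁻¹ = (s * t)⁻¹ →
      x * ((s * t) ^ (2 * k + 1)) = ((s * t) ^ (2 * k + 1)) * x := by
    intro x hx
    have h1 : x * (s * t) ^ (2 * k + 1) * x⁻¹ = ((s * t) ^ (2 * k + 1))⁻¹ := by
      rw [← conj_pow, hx, inv_pow]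
    rw [hρinv] at h1
    calc x * (s * t) ^ (2 * k + 1) = x * (s * t) ^ (2 * k + 1) * x⁻¹ * x := by group
    _ = (s * t) ^ (2 * k + 1) * x := by rw [h1]
  have hcommS := hρcomm s hconjS
  have hcommT := hρcomm t hconjT
  have hclosure : Subgroup.closure ({s, t} : Set W) = ⊤ := by
    have h1 : Set.range cs.simple = ({s, t} : Set W) := by
      rw [show cs.simple = fun i : ({s, t} : Set W) => (i : W) from funext hsimp]
      exact Subtype.range_coe
    rw [← h1]
    exact cs.subgroup_closure_range_simple
  have hcen : ∀ w : W, (s * t) ^ (2 * k + 1) * w = w * (s * t) ^ (2 * k + 1) := by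
    intro w
    have hle : Subgroup.closure ({s, t} : Set W) ≤
        Subgroup.centralizer {(s * t) ^ (2 * k + 1)} := by
      rw [Subgroup.closure_le]
      rintro x hx
      rcases hx with rfl | rfl
      · exact Subgroup.mem_centralizer_iff.mpr (by rintro g rfl; exact hcommS.symm)
      · exact Subgroup.mem_centralizer_iff.mpr (by rintro g rfl; exact hcommT.symm)
    have hw : w ∈ Subgroup.centralizer {(s * t) ^ (2 * k + 1)} :=
      hle (by rw [hclosure]; exact Subgroup.mem_top w)
    exact Subgroup.mem_centralizer_iff.mp hw _ rfl
  -- the sign character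
  have hlift_sign : CoxeterMatrix.IsLiftable M (fun _ => (-1 : ℤˣ)) := by
    intro i j; simp
  let ε : W →* ℤˣ := cs.lift ⟨fun _ => (-1 : ℤˣ), hlift_sign⟩
  have εS : ε s = -1 := by
    have h := cs.lift_apply_simple hlift_sign ⟨s, hmemS⟩
    rw [hS] at h
    exact h
  have εT : ε t = -1 := by
    have h := cs.lift_apply_simple hlift_sign ⟨t, hmemT⟩
    rw [hT] at h
    exact h
  have εpow : ε ((s * t) ^ (2 * k + 1)) = 1 := by
    rw [map_pow, map_mul, εS, εT]
    simp
  -- orders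
  have hst2 : s * (t * s * t) = (s * t) ^ 2 := by rw [pow_two]; group
  have hgcd : Nat.gcd (2 * (2 * k + 1)) 2 = 2 := by
    have h := Nat.gcd_mul_left 2 (2 * k + 1) 1
    simpa using h
  have hord2 : orderOf (s * (t * s * t)) = 2 * k + 1 := by
    rw [hst2, orderOf_pow' _ (by norm_num : (2 : ℕ) ≠ 0), hord, hgcd]
    omega
  have hsρ_ne : s * (s * t) ^ (2 * k + 1) ≠ 1 := by
    intro h
    have h2 := congrArg ε h
    rw [map_mul, εS, εpow, map_one, mul_one] at h2
    exact absurd h2 (by decide)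
  have hsρ_sq : (s * (s * t) ^ (2 * k + 1)) ^ 2 = 1 := by
    rw [pow_two]
    calc (s * (s * t) ^ (2 * k + 1)) * (s * (s * t) ^ (2 * k + 1))
        = s * ((s * t) ^ (2 * k + 1) * s) * (s * t) ^ (2 * k + 1) := by group
    _ = s * (s * (s * t) ^ (2 * k + 1)) * (s * t) ^ (2 * k + 1) := by rw [hcen s]
    _ = (s * s) * ((s * t) ^ (2 * k + 1) * (s * t) ^ (2 * k + 1)) := by group
    _ = 1 := by rw [hs2, hρ2, one_mul]
  have hordsρ : orderOf (s * (s * t) ^ (2 * k + 1)) = 2 := orderOf_eq_prime hsρ_sq hsρ_ne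
  have htstsq : (t * s * t) * (t * s * t) = 1 := by
    calc (t * s * t) * (t * s * t) = t * s * (t * t) * (s * t) := by group
    _ = t * (s * s) * t := by rw [ht2]; group
    _ = t * t := by rw [hs2]; group
    _ = 1 := ht2
  have htstinv : (t * s * t)⁻¹ = t * s * t := inv_eq_of_mul_eq_one_right htstsq
  have εtst : ε (t * s * t) = -1 := by
    rw [map_mul, map_mul, εT, εS]
    norm_num
  have htstρ_ne : (t * s * t) * (s * t) ^ (2 * k + 1) ≠ 1 := by
    intro h
    have h2 := congrArg ε h
    rw [map_mul, εtst, εpow, map_one, mul_one] at h2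
    exact absurd h2 (by decide)
  have htstρ_sq : ((t * s * t) * (s * t) ^ (2 * k + 1)) ^ 2 = 1 := by
    rw [pow_two]
    calc ((t * s * t) * (s * t) ^ (2 * k + 1)) * ((t * s * t) * (s * t) ^ (2 * k + 1))
        = (t * s * t) * ((s * t) ^ (2 * k + 1) * (t * s * t)) * (s * t) ^ (2 * k + 1) := by
          group
    _ = (t * s * t) * ((t * s * t) * (s * t) ^ (2 * k + 1)) * (s * t) ^ (2 * k + 1) := by
          rw [hcen (t * s * t)]
    _ = ((t * s * t) * (t * s * t)) * ((s * t) ^ (2 * k + 1) * (s * t) ^ (2 * k + 1)) := by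
          group
    _ = 1 := by rw [htstsq, hρ2, one_mul]
  have hordtstρ : orderOf ((t * s * t) * (s * t) ^ (2 * k + 1)) = 2 :=
    orderOf_eq_prime htstρ_sq htstρ_ne
  -- distinctness
  have hne_stst : s ≠ t * s * t := by
    intro h
    have h1 : orderOf (s * (t * s * t)) = 1 := by
      rw [show s * (t * s * t) = (1 : W) by rw [← h]; exact hs2, orderOf_one]
    omega
  have hne_sρ : s ≠ (s * t) ^ (2 * k + 1) := by
    intro h
    exact hsρ_ne (by rw [← h]; exact hs2)
  have hne_tstρ : t * s * t ≠ (s * t) ^ (2 * k + 1) := by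
    intro h
    exact htstρ_ne (by rw [← h]; exact htstsq)
  refine ⟨hcen, hord2, hordsρ, hordtstρ, ?_⟩
  -- the new Coxeter system
  have hmA : s ∈ ({s, t * s * t, (s * t) ^ (2 * k + 1)} : Set W) := Set.mem_insert _ _
  have hmB : t * s * t ∈ ({s, t * s * t, (s * t) ^ (2 * k + 1)} : Set W) :=
    Set.mem_insert_of_mem _ (Set.mem_insert _ _)
  have hmC : (s * t) ^ (2 * k + 1) ∈ ({s, t * s * t, (s * t) ^ (2 * k + 1)} : Set W) :=
    Set.mem_insert_of_mem _ (Set.mem_insert_of_mem _ rfl)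
  let M' := dMat k hk s t
  let cs' := M'.toCoxeterSystem
  let jA : ({s, t * s * t, (s * t) ^ (2 * k + 1)} : Set W) := ⟨s, hmA⟩
  let jB : ({s, t * s * t, (s * t) ^ (2 * k + 1)} : Set W) := ⟨t * s * t, hmB⟩
  let jC : ({s, t * s * t, (s * t) ^ (2 * k + 1)} : Set W) := ⟨(s * t) ^ (2 * k + 1), hmC⟩
  let A : M'.Group := M'.simple jA
  let B : M'.Group := M'.simple jB
  let C : M'.Group := M'.simple jC
  have hA2 : A * A = 1 := cs'.simple_mul_simple_self jA
  have hB2 : B * B = 1 := cs'.simple_mul_simple_self jB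
  have hC2 : C * C = 1 := cs'.simple_mul_simple_self jC
  have hAinv : A⁻¹ = A := inv_eq_of_mul_eq_one_right hA2
  have hBinv : B⁻¹ = B := inv_eq_of_mul_eq_one_right hB2
  have hCinv : C⁻¹ = C := inv_eq_of_mul_eq_one_right hC2
  have eAB : M'.M jA jB = 2 * k + 1 := by
    show (if s = t * s * t then 1
      else if s = (s * t) ^ (2 * k + 1) ∨ t * s * t = (s * t) ^ (2 * k + 1) then 2
      else 2 * k + 1) = 2 * k + 1
    rw [if_neg hne_stst, if_neg (not_or.mpr ⟨hne_sρ, hne_tstρ⟩)]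
  have eAC : M'.M jA jC = 2 := by
    show (if s = (s * t) ^ (2 * k + 1) then 1
      else if s = (s * t) ^ (2 * k + 1) ∨ (s * t) ^ (2 * k + 1) = (s * t) ^ (2 * k + 1) then 2
      else 2 * k + 1) = 2
    rw [if_neg hne_sρ, if_pos (Or.inr rfl)]
  have eBC : M'.M jB jC = 2 := by
    show (if t * s * t = (s * t) ^ (2 * k + 1) then 1
      else if t * s * t = (s * t) ^ (2 * k + 1) ∨ (s * t) ^ (2 * k + 1) = (s * t) ^ (2 * k + 1)
        then 2 else 2 * k + 1) = 2
    rw [if_neg hne_tstρ, if_pos (Or.inr rfl)]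
  have hABrel : (A * B) ^ (2 * k + 1) = 1 := by
    have h := cs'.simple_mul_simple_pow jA jB
    rwa [eAB] at h
  have hACrel : (A * C) ^ 2 = 1 := by
    have h := cs'.simple_mul_simple_pow jA jC
    rwa [eAC] at h
  have hBCrel : (B * C) ^ 2 = 1 := by
    have h := cs'.simple_mul_simple_pow jB jC
    rwa [eBC] at h
  have hCA : C * A = A * C := by
    have h1 : (A * C) * (A * C) = 1 := by rw [← pow_two]; exact hACrel
    have h2 := inv_eq_of_mul_eq_one_right h1
    rwa [mul_inv_rev, hCinv, hAinv] at h2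
  have hCB : C * B = B * C := by
    have h1 : (B * C) * (B * C) = 1 := by rw [← pow_two]; exact hBCrel
    have h2 := inv_eq_of_mul_eq_one_right h1
    rwa [mul_inv_rev, hCinv, hBinv] at h2
  have cCA : Commute C A := hCA
  have cCB : Commute C B := hCB
  have cCP : Commute C ((A * B) ^ (k + 1)) := (cCA.mul_right cCB).pow_right _
  have hBA : B * A = (A * B)⁻¹ := by rw [mul_inv_rev, hAinv, hBinv]
  have hAPA : A * (A * B) ^ (k + 1) * A = ((A * B) ^ (k + 1))⁻¹ := by
    have h1 : A * (A * B) * A⁻¹ = B * A := by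
      rw [hAinv, show A * (A * B) * A = (A * A) * (B * A) by group, hA2, one_mul]
    calc A * (A * B) ^ (k + 1) * A = A * (A * B) ^ (k + 1) * A⁻¹ := by rw [hAinv]
    _ = (A * (A * B) * A⁻¹) ^ (k + 1) := conj_pow.symm
    _ = (B * A) ^ (k + 1) := by rw [h1]
    _ = ((A * B) ^ (k + 1))⁻¹ := by rw [hBA, inv_pow]
  let TT : M'.Group := A * (A * B) ^ (k + 1) * C
  have hTT2 : TT * TT = 1 := by
    show (A * (A * B) ^ (k + 1) * C) * (A * (A * B) ^ (k + 1) * C) = 1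
    calc (A * (A * B) ^ (k + 1) * C) * (A * (A * B) ^ (k + 1) * C)
        = A * (A * B) ^ (k + 1) * (C * (A * (A * B) ^ (k + 1))) * C := by group
    _ = A * (A * B) ^ (k + 1) * ((A * (A * B) ^ (k + 1)) * C) * C := by
          rw [(cCA.mul_right cCP).eq]
    _ = (A * (A * B) ^ (k + 1) * A) * (A * B) ^ (k + 1) * (C * C) := by group
    _ = ((A * B) ^ (k + 1))⁻¹ * (A * B) ^ (k + 1) * 1 := by rw [hAPA, hC2]
    _ = 1 := by group
  have hTTinv : TT⁻¹ = TT := inv_eq_of_mul_eq_one_right hTT2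
  have hATT : A * TT = (A * B) ^ (k + 1) * C := by
    show A * (A * (A * B) ^ (k + 1) * C) = _
    rw [show A * (A * (A * B) ^ (k + 1) * C) = (A * A) * ((A * B) ^ (k + 1) * C) by group,
      hA2, one_mul]
  have hC2' : C ^ 2 = 1 := by rw [pow_two]; exact hC2
  have hCpow_even : ∀ m : ℕ, C ^ (2 * m) = 1 := fun m => by
    rw [pow_mul, hC2', one_pow]
  have hABn : ∀ m : ℕ, (A * B) ^ ((2 * k + 1) * m) = 1 := fun m => by
    rw [pow_mul, hABrel, one_pow]
  have hATTn : (A * TT) ^ (2 * (2 * k + 1)) = 1 := by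
    rw [hATT, (cCP.symm).mul_pow, ← pow_mul,
      show (k + 1) * (2 * (2 * k + 1)) = (2 * k + 1) * (2 * (k + 1)) by ring, hABn, one_mul]
    exact hCpow_even _
  -- the homomorphism ψ : W →* M'.Group
  have hliftψ : CoxeterMatrix.IsLiftable M
      (fun i : ({s, t} : Set W) => if (i : W) = s then A else TT) := by
    intro i j
    beta_reduce
    by_cases hij : i = j
    · subst hij
      rw [M.diagonal, pow_one]
      by_cases h : (i : W) = s
      · rw [if_pos h]; exact hA2
      · rw [if_neg h]; exact hTT2
    · have hvi := i.2
      have hvj := j.2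
      simp only [Set.mem_insert_iff, Set.mem_singleton_iff] at hvi hvj
      have hvne : (i : W) ≠ (j : W) := fun h => hij (Subtype.ext h)
      have hdvd : 2 * (2 * k + 1) ∣ M.M i j := by
        rw [← hord]
        apply orderOf_dvd_of_pow_eq_one
        have h := cs.simple_mul_simple_pow i j
        rw [hsimp i, hsimp j] at h
        rcases hvi with h1 | h1 <;> rcases hvj with h2 | h2
        · exact absurd (h1.trans h2.symm) hvne
        · rw [h1, h2] at h; exact h
        · rw [h1, h2] at h
          have h3 : ((s * t)⁻¹) ^ (M.M i j) = 1 := by rw [hstinv]; exact h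
          rwa [inv_pow, inv_eq_one] at h3
        · exact absurd (h1.trans h2.symm) hvne
      obtain ⟨q, hq⟩ := hdvd
      rcases hvi with h1 | h1 <;> rcases hvj with h2 | h2
      · exact absurd (h1.trans h2.symm) hvne
      · rw [if_pos h1, if_neg (by rw [h2]; exact fun hh => hne hh.symm)]
        rw [hq, pow_mul, hATTn, one_pow]
      · rw [if_neg (by rw [h1]; exact fun hh => hne hh.symm), if_pos h2]
        have hTA : TT * A = (A * TT)⁻¹ := by rw [mul_inv_rev, hAinv, hTTinv]
        rw [hTA, inv_pow, hq, pow_mul, hATTn, one_pow, inv_one]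
      · exact absurd (h1.trans h2.symm) hvne
  let ψ : W →* M'.Group := cs.lift ⟨_, hliftψ⟩
  have hψS : ψ s = A := by
    have h := cs.lift_apply_simple hliftψ ⟨s, hmemS⟩
    rw [hS] at h
    simpa using h
  have hψT : ψ t = TT := by
    have h := cs.lift_apply_simple hliftψ ⟨t, hmemT⟩
    rw [hT] at h
    rw [if_neg (fun hh : t = s => hne hh.symm)] at h
    exact h
  -- the homomorphism φ : M'.Group →* W
  have hliftφ : CoxeterMatrix.IsLiftable M'
      (fun i : ({s, t * s * t, (s * t) ^ (2 * k + 1)} : Set W) => (i : W)) := by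
    intro i j
    beta_reduce
    have hinvR : ∀ x ∈ ({s, t * s * t, (s * t) ^ (2 * k + 1)} : Set W), x * x = 1 := by
      intro x hx
      simp only [Set.mem_insert_iff, Set.mem_singleton_iff] at hx
      rcases hx with rfl | rfl | rfl
      exacts [hs2, htstsq, hρ2]
    by_cases hij : (i : W) = (j : W)
    · obtain rfl : i = j := Subtype.ext hij
      rw [M'.diagonal, pow_one]
      exact hinvR _ i.2
    · by_cases hρij : (i : W) = (s * t) ^ (2 * k + 1) ∨ (j : W) = (s * t) ^ (2 * k + 1)
      · have hM : M'.M i j = 2 := by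
          show (if (i : W) = (j : W) then 1
            else if (i : W) = (s * t) ^ (2 * k + 1) ∨ (j : W) = (s * t) ^ (2 * k + 1) then 2
            else 2 * k + 1) = 2
          rw [if_neg hij, if_pos hρij]
        rw [hM, pow_two]
        rcases hρij with h | h
        · calc ((i : W) * (j : W)) * ((i : W) * (j : W))
              = (i : W) * ((j : W) * (i : W)) * (j : W) := by group
          _ = (i : W) * ((i : W) * (j : W)) * (j : W) := by rw [h, ← hcen (j : W)]
          _ = ((i : W) * (i : W)) * ((j : W) * (j : W)) := by group
          _ = 1 := by rw [hinvR _ i.2, hinvR _ j.2, one_mul]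
        · calc ((i : W) * (j : W)) * ((i : W) * (j : W))
              = (i : W) * ((j : W) * (i : W)) * (j : W) := by group
          _ = (i : W) * ((i : W) * (j : W)) * (j : W) := by rw [h, hcen (i : W)]
          _ = ((i : W) * (i : W)) * ((j : W) * (j : W)) := by group
          _ = 1 := by rw [hinvR _ i.2, hinvR _ j.2, one_mul]
      · have hM : M'.M i j = 2 * k + 1 := by
          show (if (i : W) = (j : W) then 1
            else if (i : W) = (s * t) ^ (2 * k + 1) ∨ (j : W) = (s * t) ^ (2 * k + 1) then 2
            else 2 * k + 1) = 2 * k + 1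
          rw [if_neg hij, if_neg hρij]
        rw [hM]
        push_neg at hρij
        obtain ⟨hiρ, hjρ⟩ := hρij
        have hvi := i.2
        have hvj := j.2
        simp only [Set.mem_insert_iff, Set.mem_singleton_iff] at hvi hvj
        have h2k1 : (s * (t * s * t)) ^ (2 * k + 1) = 1 := by
          rw [← hord2]; exact pow_orderOf_eq_one _
        rcases hvi with h1 | h1 | h1 <;> rcases hvj with h2 | h2 | h2
        · exact absurd (h1.trans h2.symm) hij
        · rw [h1, h2]; exact h2k1
        · exact absurd h2 hjρ
        · rw [h1, h2]
          have hts : (t * s * t) * s = (s * (t * s * t))⁻¹ := by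
            rw [mul_inv_rev, hsinv, htstinv]
          rw [hts, inv_pow, h2k1, inv_one]
        · exact absurd (h1.trans h2.symm) hij
        · exact absurd h2 hjρ
        · exact absurd h1 hiρ
        · exact absurd h1 hiρ
        · exact absurd h1 hiρ
  let φ : M'.Group →* W := cs'.lift ⟨_, hliftφ⟩
  have hφ : ∀ i, φ (M'.simple i) = (i : W) := fun i => cs'.lift_apply_simple hliftφ i
  have hφA : φ A = s := hφ jA
  have hφB : φ B = t * s * t := hφ jB
  have hφC : φ C = (s * t) ^ (2 * k + 1) := hφ jC
  -- key computation for t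
  have hkey_t : s * (s * (t * s * t)) ^ (k + 1) * (s * t) ^ (2 * k + 1) = t := by
    rw [hst2, ← pow_mul, mul_assoc, ← pow_add,
      show 2 * (k + 1) + (2 * k + 1) = 2 * (2 * k + 1) + 1 by ring, pow_succ, hnpow, one_mul,
      show s * (s * t) = (s * s) * t by group, hs2, one_mul]
  have hleft : ∀ w : W, φ (ψ w) = w := by
    intro w
    refine cs.simple_induction (p := fun w => φ (ψ w) = w) w (fun i => ?_) (by simp)
      (fun w1 w2 h1 h2 => by beta_reduce; rw [map_mul, map_mul, h1, h2])
    beta_reduce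
    have hvi := i.2
    simp only [Set.mem_insert_iff, Set.mem_singleton_iff] at hvi
    rw [hsimp i]
    rcases hvi with h1 | h1 <;> rw [h1]
    · rw [hψS]; exact hφA
    · rw [hψT]
      show φ (A * (A * B) ^ (k + 1) * C) = t
      rw [map_mul, map_mul, map_pow, map_mul, hφA, hφB, hφC]
      exact hkey_t
  have hright : ∀ x : M'.Group, ψ (φ x) = x := by
    intro x
    refine cs'.simple_induction (p := fun y => ψ (φ y) = y) x (fun i => ?_) (by simp)
      (fun a b h1 h2 => by beta_reduce; rw [map_mul, map_mul, h1, h2])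
    beta_reduce
    have hvi := i.2
    simp only [Set.mem_insert_iff, Set.mem_singleton_iff] at hvi
    have hφi : φ (cs'.simple i) = (i : W) := hφ i
    rw [hφi]
    rcases hvi with h1 | h1 | h1
    · rw [h1, show i = jA from Subtype.ext h1, hψS]; rfl
    · rw [h1, show i = jB from Subtype.ext h1]
      rw [map_mul, map_mul, hψT, hψS]
      show TT * A * TT = B
      calc TT * A * TT
          = (A * (A * B) ^ (k + 1) * C) * A * (A * (A * B) ^ (k + 1) * C) := rfl
      _ = A * (A * B) ^ (k + 1) * (C * ((A * A) * (A * B) ^ (k + 1))) * C := by group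
      _ = A * (A * B) ^ (k + 1) * (C * (A * B) ^ (k + 1)) * C := by rw [hA2, one_mul]
      _ = A * (A * B) ^ (k + 1) * ((A * B) ^ (k + 1) * C) * C := by rw [cCP.eq]
      _ = A * ((A * B) ^ (k + 1) * (A * B) ^ (k + 1)) * (C * C) := by group
      _ = A * ((A * B) ^ (k + 1) * (A * B) ^ (k + 1)) := by rw [hC2, mul_one]
      _ = A * (A * B) ^ (k + 1 + (k + 1)) := by rw [← pow_add (A * B) (k + 1) (k + 1)]
      _ = A * ((A * B) ^ (2 * k + 1) * (A * B) ^ 1) := by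
            rw [show k + 1 + (k + 1) = 2 * k + 1 + 1 by ring, pow_add (A * B) (2 * k + 1) 1]
      _ = A * (1 * (A * B)) := by rw [hABrel, pow_one]
      _ = B := by rw [one_mul, show A * (A * B) = (A * A) * B by group, hA2, one_mul]
    · rw [h1, show i = jC from Subtype.ext h1]
      rw [map_pow, map_mul, hψS, hψT]
      show (A * TT) ^ (2 * k + 1) = C
      rw [hATT, (cCP.symm).mul_pow, ← pow_mul,
        show (k + 1) * (2 * k + 1) = (2 * k + 1) * (k + 1) by ring, hABn, one_mul,
        pow_succ C (2 * k), hCpow_even k, one_mul]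
  let e : W ≃* M'.Group := MulEquiv.mk ⟨(ψ : W → M'.Group), (φ : M'.Group → W), hleft, hright⟩
    (map_mul ψ)
  exact ⟨M', ⟨e⟩, fun r => hφ r⟩
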